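/- Let K = max_{i≤n}‖x_i‖_∞, let c̄ > 0, and let κ > 0 satisfy κ·‖δ_T‖ ≤ ‖√w_i·x_i'δ‖_{2,n} for every δ ∈ Δ_c̄. Then for every δ ∈ Δ_c̄: κ·(1/n)∑_{i=1}^n w_i·|x_i'δ|³ ≤ (1+c̄)·√s·K·‖√w_i·x_i'δ‖³_{2,n}. In particular, the restricted nonlinear impact coefficient over the cone Δ_c̄ is bounded below by κ/((1+c̄)·√s·K). -/

import Mathlib

open Finset

/-- The logistic link function `G(t) = exp t / (1 + exp t)`. -/
noncomputable def logistic (t : ℝ) : ℝ := Real.exp t / (1 + Real.exp t)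

/-- Inner product `x_i'η` of the `i`-th design vector with `η`. -/
def xdot {n p : ℕ} (x : Fin n → Fin p → ℝ) (η : Fin p → ℝ) (i : Fin n) : ℝ :=
  ∑ j, x i j * η j

/-- Average logistic negative log-likelihood
`Λ(η) = (1/n)∑ᵢ [log(1+exp(x_i'η)) − y_i·(x_i'η)]`. -/
noncomputable def Lam {n p : ℕ} (x : Fin n → Fin p → ℝ) (y : Fin n → ℝ)
    (η : Fin p → ℝ) : ℝ :=
  (1 / (n : ℝ)) * ∑ i, (Real.log (1 + Real.exp (xdot x η i)) - y i * xdot x η i)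

/-- Gradient of `Λ`: `∇Λ(η) = (1/n)∑ᵢ (G(x_i'η) − y_i)·x_i`. -/
noncomputable def gradLam {n p : ℕ} (x : Fin n → Fin p → ℝ) (y : Fin n → ℝ)
    (η : Fin p → ℝ) (j : Fin p) : ℝ :=
  (1 / (n : ℝ)) * ∑ i, (logistic (xdot x η i) - y i) * x i j

/-- Sup-norm `‖∇Λ(η)‖_∞` of the gradient of `Λ`. -/
noncomputable def gradLamSup {n p : ℕ} (x : Fin n → Fin p → ℝ) (y : Fin n → ℝ)
    (η : Fin p → ℝ) : ℝ :=
  ⨆ j : Fin p, |gradLam x y η j|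

/-- The logistic weights `w_i = G(x_i'η₀)·(1 − G(x_i'η₀))`. -/
noncomputable def wgt {n p : ℕ} (x : Fin n → Fin p → ℝ) (η₀ : Fin p → ℝ) (i : Fin n) : ℝ :=
  logistic (xdot x η₀ i) * (1 - logistic (xdot x η₀ i))

/-- Weighted prediction norm `‖√w_i·x_i'δ‖_{2,n} = ((1/n)∑ᵢ w_i (x_i'δ)²)^{1/2}`. -/
noncomputable def predNorm {n p : ℕ} (x : Fin n → Fin p → ℝ) (w : Fin n → ℝ)
    (δ : Fin p → ℝ) : ℝ :=
  Real.sqrt ((1 / (n : ℝ)) * ∑ i, w i * xdot x δ i ^ 2)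

/-- Support of a coefficient vector. -/
noncomputable def supp {p : ℕ} (η : Fin p → ℝ) : Finset (Fin p) :=
  Finset.univ.filter (fun j => η j ≠ 0)

/-- ℓ1 norm of a vector in `ℝ^p`. -/
def l1norm {p : ℕ} (δ : Fin p → ℝ) : ℝ := ∑ j, |δ j|

/-- The restricted cone `Δ_c̄ = {δ : ‖δ_{T^c}‖₁ ≤ c̄·‖δ_T‖₁}` for a support set `T`. -/
noncomputable def inCone {p : ℕ} (T : Finset (Fin p)) (cbar : ℝ) (δ : Fin p → ℝ) : Prop :=
  ∑ j ∈ Tᶜ, |δ j| ≤ cbar * ∑ j ∈ T, |δ j|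

/-- Lower bound on the restricted nonlinear impact coefficient over the cone `Δ_c̄`:
with `K = max_i ‖x_i‖_∞` and `κ` a weighted restricted eigenvalue, for every
`δ ∈ Δ_c̄` one has `κ·(1/n)∑ᵢ w_i|x_i'δ|³ ≤ (1+c̄)√s·K·‖√w_i x_i'δ‖³_{2,n}`; in
particular the restricted nonlinear impact coefficient is bounded below by
`κ/((1+c̄)√s·K)`, in the sense that
`(κ/((1+c̄)√s·K))·(1/n)∑ᵢ w_i|x_i'δ|³ ≤ ‖√w_i x_i'δ‖³_{2,n}` on the cone. -/
theorem restricted_nonlinear_impact_bound {n p : ℕ} (hn : 0 < n) (hp : 0 < p)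
    (x : Fin n → Fin p → ℝ) (η₀ : Fin p → ℝ) (hs : 1 ≤ (supp η₀).card)
    (K : ℝ) (hK : K = ⨆ i : Fin n, ⨆ j : Fin p, |x i j|) (hKpos : 0 < K)
    (cbar : ℝ) (hcbar : 0 < cbar)
    (κ : ℝ) (hκ : 0 < κ)
    (hRE : ∀ δ : Fin p → ℝ, inCone (supp η₀) cbar δ →
      κ * Real.sqrt (∑ j ∈ supp η₀, δ j ^ 2) ≤ predNorm x (wgt x η₀) δ) :
    ∀ δ : Fin p → ℝ, inCone (supp η₀) cbar δ →
      κ * ((1 / (n : ℝ)) * ∑ i, wgt x η₀ i * |xdot x δ i| ^ 3)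
          ≤ (1 + cbar) * Real.sqrt ((supp η₀).card) * K * predNorm x (wgt x η₀) δ ^ 3 ∧
        (κ / ((1 + cbar) * Real.sqrt ((supp η₀).card) * K))
            * ((1 / (n : ℝ)) * ∑ i, wgt x η₀ i * |xdot x δ i| ^ 3)
          ≤ predNorm x (wgt x η₀) δ ^ 3 := by
  intro δ hδ
  set T := supp η₀ with hT
  set P := predNorm x (wgt x η₀) δ with hPdef
  have hwpos : ∀ i, 0 < wgt x η₀ i := by
    intro i
    unfold wgt logistic
    have he : 0 < Real.exp (xdot x η₀ i) := Real.exp_pos _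
    have h1 : 0 < 1 + Real.exp (xdot x η₀ i) := by linarith
    have hgt : 0 < Real.exp (xdot x η₀ i) / (1 + Real.exp (xdot x η₀ i)) := div_pos he h1
    have hlt : Real.exp (xdot x η₀ i) / (1 + Real.exp (xdot x η₀ i)) < 1 :=
      (div_lt_one h1).2 (by linarith)
    nlinarith
  have hPnn : 0 ≤ P := Real.sqrt_nonneg _
  have hP2 : P ^ 2 = (1 / (n : ℝ)) * ∑ i, wgt x η₀ i * xdot x δ i ^ 2 := by
    rw [hPdef]
    unfold predNorm
    rw [Real.sq_sqrt]
    apply mul_nonneg (by positivity)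
    exact Finset.sum_nonneg fun i _ => mul_nonneg (hwpos i).le (sq_nonneg _)
  have hsq : (0:ℝ) < Real.sqrt (T.card) := by
    apply Real.sqrt_pos.2
    exact_mod_cast Nat.lt_of_lt_of_le Nat.zero_lt_one hs
  set D := (1 + cbar) * Real.sqrt (T.card) * K with hD
  have hDpos : 0 < D := by positivity
  have hxK : ∀ i j, |x i j| ≤ K := by
    intro i j
    rw [hK]
    calc |x i j| ≤ ⨆ j : Fin p, |x i j| :=
          le_ciSup (f := fun j => |x i j|)
            (Set.Finite.bddAbove (Set.finite_range _)) j
      _ ≤ ⨆ i : Fin n, ⨆ j : Fin p, |x i j| :=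
          le_ciSup (f := fun i => ⨆ j : Fin p, |x i j|)
            (Set.Finite.bddAbove (Set.finite_range _)) i
  have hkey : ∀ i, κ * |xdot x δ i| ≤ D * P := by
    intro i
    have h1 : |xdot x δ i| ≤ K * ∑ j, |δ j| := by
      calc |xdot x δ i| ≤ ∑ j, |x i j * δ j| := Finset.abs_sum_le_sum_abs _ _
        _ ≤ ∑ j, K * |δ j| := by
            apply Finset.sum_le_sum
            intro j _
            rw [abs_mul]
            exact mul_le_mul_of_nonneg_right (hxK i j) (abs_nonneg _)
        _ = K * ∑ j, |δ j| := by rw [Finset.mul_sum]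
    have hsplit : ∑ j, |δ j| = (∑ j ∈ T, |δ j|) + ∑ j ∈ Tᶜ, |δ j| :=
      (Finset.sum_add_sum_compl T _).symm
    have hcone : ∑ j ∈ Tᶜ, |δ j| ≤ cbar * ∑ j ∈ T, |δ j| := hδ
    have hcs : ∑ j ∈ T, |δ j| ≤ Real.sqrt (T.card) * Real.sqrt (∑ j ∈ T, δ j ^ 2) := by
      rw [← Real.sqrt_mul (Nat.cast_nonneg _)]
      apply Real.le_sqrt_of_sq_le
      have := sq_sum_le_card_mul_sum_sq (s := T) (f := fun j => |δ j|)
      simpa [sq_abs] using this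
    have hRE' : κ * Real.sqrt (∑ j ∈ T, δ j ^ 2) ≤ P := hRE δ hδ
    have hl1 : ∑ j, |δ j| ≤ (1 + cbar) * Real.sqrt (T.card) * Real.sqrt (∑ j ∈ T, δ j ^ 2) := by
      rw [hsplit]
      have hTnn : 0 ≤ ∑ j ∈ T, |δ j| := Finset.sum_nonneg fun j _ => abs_nonneg _
      nlinarith
    have h2 : κ * |xdot x δ i| ≤ κ * (K * ((1 + cbar) * Real.sqrt (T.card) * Real.sqrt (∑ j ∈ T, δ j ^ 2))) := by
      apply mul_le_mul_of_nonneg_left _ hκ.le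
      calc |xdot x δ i| ≤ K * ∑ j, |δ j| := h1
        _ ≤ _ := mul_le_mul_of_nonneg_left hl1 hKpos.le
    calc κ * |xdot x δ i| ≤ κ * (K * ((1 + cbar) * Real.sqrt (T.card) * Real.sqrt (∑ j ∈ T, δ j ^ 2))) := h2
      _ = D * (κ * Real.sqrt (∑ j ∈ T, δ j ^ 2)) := by rw [hD]; ring
      _ ≤ D * P := mul_le_mul_of_nonneg_left hRE' hDpos.le
  have hsum : ∑ i, wgt x η₀ i * |xdot x δ i| ^ 3 * κ
      ≤ ∑ i, wgt x η₀ i * xdot x δ i ^ 2 * (D * P) := by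
    apply Finset.sum_le_sum
    intro i _
    have h3 : |xdot x δ i| ^ 3 = xdot x δ i ^ 2 * |xdot x δ i| := by
      rw [← sq_abs]; ring
    rw [h3]
    calc wgt x η₀ i * (xdot x δ i ^ 2 * |xdot x δ i|) * κ
        = wgt x η₀ i * xdot x δ i ^ 2 * (κ * |xdot x δ i|) := by ring
      _ ≤ wgt x η₀ i * xdot x δ i ^ 2 * (D * P) :=
          mul_le_mul_of_nonneg_left (hkey i) (mul_nonneg (hwpos i).le (sq_nonneg _))
  have hmain : κ * ((1 / (n : ℝ)) * ∑ i, wgt x η₀ i * |xdot x δ i| ^ 3) ≤ D * P ^ 3 := by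
    have hninv : (0:ℝ) ≤ 1 / (n : ℝ) := by positivity
    have := mul_le_mul_of_nonneg_left hsum hninv
    calc κ * ((1 / (n : ℝ)) * ∑ i, wgt x η₀ i * |xdot x δ i| ^ 3)
        = (1 / (n : ℝ)) * ∑ i, wgt x η₀ i * |xdot x δ i| ^ 3 * κ := by
          rw [← Finset.sum_mul]; ring
      _ ≤ (1 / (n : ℝ)) * ∑ i, wgt x η₀ i * xdot x δ i ^ 2 * (D * P) := this
      _ = (D * P) * ((1 / (n : ℝ)) * ∑ i, wgt x η₀ i * xdot x δ i ^ 2) := by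
          rw [← Finset.sum_mul]; ring
      _ = (D * P) * P ^ 2 := by rw [← hP2]
      _ = D * P ^ 3 := by ring
  refine ⟨hmain, ?_⟩
  rw [div_mul_eq_mul_div, div_le_iff₀ hDpos]
  linarith
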